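/- Suppose R₁ = f₁ + f₂ where f₁, f₂ ∈ P_{3,6} (nonnegative ternary sextics), R₁ is the first Robinson form, and the nine points X = {−1,0,1}² × {1} are all zeros of f₂. Then f₁ is not a sum of squares. -/

import Mathlib

open MvPolynomial

/-- The first Robinson form. -/
noncomputable def Robinson1 : MvPolynomial (Fin 3) ℝ :=
  X 0 ^ 6 + X 1 ^ 6 + X 2 ^ 6
    - (X 0 ^ 4 * X 1 ^ 2 + X 0 ^ 4 * X 2 ^ 2 + X 1 ^ 4 * X 0 ^ 2 + X 1 ^ 4 * X 2 ^ 2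
        + X 2 ^ 4 * X 0 ^ 2 + X 2 ^ 4 * X 1 ^ 2)
    + 3 * (X 0 ^ 2 * X 1 ^ 2 * X 2 ^ 2)

/-- The substitution `Xᵢ ↦ (xᵢ)·t`, turning a ternary polynomial into a univariate one. -/
noncomputable def RobAux.Ah (x : Fin 3 → ℝ) : MvPolynomial (Fin 3) ℝ →+* Polynomial ℝ :=
  eval₂Hom (Polynomial.C) (fun j => Polynomial.C (x j) * Polynomial.X)

theorem RobAux.coeffA (x : Fin 3 → ℝ) (p : MvPolynomial (Fin 3) ℝ) (n : ℕ) :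
    (RobAux.Ah x p).coeff n = MvPolynomial.eval x (homogeneousComponent n p) := by
  induction p using MvPolynomial.induction_on' with
  | add p q hp hq => simp [map_add, hp, hq]
  | monomial d c =>
      rw [RobAux.Ah, eval₂Hom_monomial]
      have hprod : (d.prod fun i e => (Polynomial.C (x i) * Polynomial.X) ^ e)
          = Polynomial.C (d.prod fun i e => x i ^ e) * Polynomial.X ^ (d.degree) := by
        rw [Finsupp.prod, Finsupp.prod, Finsupp.degree_apply]
        simp_rw [mul_pow, ← Polynomial.C_pow]
        rw [Finset.prod_mul_distrib, map_prod, Finset.prod_pow_eq_pow_sum]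
      rw [hprod, ← mul_assoc, ← map_mul, Polynomial.coeff_C_mul, Polynomial.coeff_X_pow]
      have hmem : (MvPolynomial.monomial d) c ∈ homogeneousSubmodule (Fin 3) ℝ d.degree :=
        isHomogeneous_monomial c rfl
      rw [homogeneousComponent_of_mem hmem]
      by_cases h : d.degree = n
      · simp [h, MvPolynomial.eval_monomial]
      · simp [if_neg (fun hh : n = d.degree => h hh.symm)]

theorem RobAux.natDegA (x : Fin 3 → ℝ) (p : MvPolynomial (Fin 3) ℝ) :
    (RobAux.Ah x p).natDegree ≤ p.totalDegree := by
  rw [Polynomial.natDegree_le_iff_coeff_eq_zero]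
  intro m hm
  rw [RobAux.coeffA, homogeneousComponent_eq_zero _ _ hm, map_zero]

theorem RobAux.sq_coeff (q : Polynomial ℝ) (D : ℕ) (h : q.natDegree ≤ D) :
    (q ^ 2).coeff (2 * D) = (q.coeff D) ^ 2 := by
  rcases eq_or_lt_of_le h with h | h
  · rw [sq, sq, ← h, two_mul, Polynomial.coeff_mul_degree_add_degree]
    rfl
  · rw [Polynomial.coeff_eq_zero_of_natDegree_lt h,
      Polynomial.coeff_eq_zero_of_natDegree_lt, zero_pow two_ne_zero]
    calc (q ^ 2).natDegree ≤ 2 * q.natDegree := Polynomial.natDegree_pow_le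
    _ < 2 * D := by omega

theorem RobAux.degree_le_three (f₁ : MvPolynomial (Fin 3) ℝ) (hf₁hom : f₁.IsHomogeneous 6)
    (k : ℕ) (g : Fin k → MvPolynomial (Fin 3) ℝ) (hg : f₁ = ∑ i, (g i) ^ 2) (i : Fin k) :
    (g i).totalDegree ≤ 3 := by
  by_contra hcon
  push_neg at hcon
  set D := Finset.univ.sup (fun i => (g i).totalDegree) with hD
  have hDi : ∀ j, (g j).totalDegree ≤ D :=
    fun j => Finset.le_sup (f := fun i => (g i).totalDegree) (Finset.mem_univ j)
  have hD4 : 4 ≤ D := le_trans hcon (hDi i)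
  have hzero : ∀ j, homogeneousComponent D (g j) = 0 := by
    intro j
    apply MvPolynomial.funext
    intro x
    rw [map_zero, ← RobAux.coeffA]
    have hsum : RobAux.Ah x f₁ = ∑ j, (RobAux.Ah x (g j)) ^ 2 := by
      rw [hg, map_sum]; simp [map_pow]
    have h1 : (RobAux.Ah x f₁).coeff (2 * D) = ∑ j, ((RobAux.Ah x (g j)).coeff D) ^ 2 := by
      rw [hsum, Polynomial.finset_sum_coeff]
      exact Finset.sum_congr rfl fun j _ =>
        RobAux.sq_coeff _ _ (le_trans (RobAux.natDegA x (g j)) (hDi j))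
    have h2 : (RobAux.Ah x f₁).coeff (2 * D) = 0 := by
      rw [RobAux.coeffA, homogeneousComponent_eq_zero, map_zero]
      have := hf₁hom.totalDegree_le
      omega
    have h3 : ∑ j, ((RobAux.Ah x (g j)).coeff D) ^ 2 = 0 := by rw [← h1, h2]
    have := (Finset.sum_eq_zero_iff_of_nonneg
      (fun j _ => sq_nonneg ((RobAux.Ah x (g j)).coeff D))).mp h3 j (Finset.mem_univ j)
    exact pow_eq_zero_iff two_ne_zero |>.mp this
  have huniv : (Finset.univ : Finset (Fin k)).Nonempty := ⟨i, Finset.mem_univ i⟩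
  obtain ⟨j, _, hj⟩ := Finset.exists_mem_eq_sup Finset.univ huniv (fun i => (g i).totalDegree)
  have hj' : (g j).totalDegree = D := by rw [hD]; exact hj.symm
  have hgj : g j ≠ 0 := by
    intro h0
    rw [h0, MvPolynomial.totalDegree_zero] at hj'
    omega
  have hsupp : (g j).support.Nonempty :=
    Finset.nonempty_iff_ne_empty.mpr (fun h => hgj (MvPolynomial.support_eq_empty.mp h))
  obtain ⟨d, hd, hdeg⟩ := Finset.exists_mem_eq_sup (g j).support hsupp
    (fun d => d.sum fun _ e => e)
  have hcoeff : MvPolynomial.coeff d (homogeneousComponent D (g j))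
      = MvPolynomial.coeff d (g j) := by
    rw [coeff_homogeneousComponent, if_pos]
    rw [MvPolynomial.totalDegree] at hj'
    rw [hdeg] at hj'
    simpa [Finsupp.degree_apply, Finsupp.sum] using hj'
  rw [hzero j] at hcoeff
  exact (MvPolynomial.mem_support_iff.mp hd) hcoeff.symm

/-- The Cayley–Bacharach linear relation on `{−1,0,1}² × {1}` for polynomials of degree ≤ 3. -/
theorem RobAux.cb (p : MvPolynomial (Fin 3) ℝ) (hp : p.totalDegree ≤ 3) :
    eval ![1,1,1] p + eval ![1,-1,1] p + eval ![-1,1,1] p + eval ![-1,-1,1] p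
      + 4 * eval ![0,0,1] p
    = 2 * (eval ![1,0,1] p + eval ![-1,0,1] p + eval ![0,1,1] p + eval ![0,-1,1] p) := by
  conv_lhs => rw [p.as_sum]
  conv_rhs => rw [p.as_sum]
  simp only [map_sum, Finset.mul_sum, ← Finset.sum_add_distrib]
  refine Finset.sum_congr rfl fun d hd => ?_
  have hdsum : d 0 + d 1 + d 2 ≤ 3 := by
    have h := MvPolynomial.le_totalDegree hd
    rw [Finsupp.sum_fintype _ _ (fun _ => rfl), Fin.sum_univ_three] at h
    omega
  simp only [MvPolynomial.eval_monomial, Finsupp.prod_pow, Fin.prod_univ_three,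
    Matrix.cons_val_zero, Matrix.cons_val_one, Matrix.head_cons, Matrix.cons_val_two,
    Matrix.tail_cons]
  have h0 : d 0 ≤ 3 := by omega
  have h1 : d 1 ≤ 3 := by omega
  set a := d 0 with ha
  set b := d 1 with hb
  clear_value a b
  interval_cases a <;> interval_cases b <;> first | (exfalso; omega) | (norm_num; ring) | norm_num

/-- If `R₁ = f₁ + f₂` with `f₁, f₂` nonnegative ternary sextic forms and `f₂`
vanishes on all nine points of `{−1,0,1}² × {1}`, then `f₁` is not a sum of squares. -/
theorem robinson1_summand_not_sos (f₁ f₂ : MvPolynomial (Fin 3) ℝ)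
    (hf₁hom : f₁.IsHomogeneous 6) (hf₂hom : f₂.IsHomogeneous 6)
    (hf₁ : ∀ x : Fin 3 → ℝ, 0 ≤ eval x f₁) (hf₂ : ∀ x : Fin 3 → ℝ, 0 ≤ eval x f₂)
    (hsum : Robinson1 = f₁ + f₂)
    (hzeros : ∀ v : Fin 3 → ℝ,
      (v 0 = -1 ∨ v 0 = 0 ∨ v 0 = 1) → (v 1 = -1 ∨ v 1 = 0 ∨ v 1 = 1) → v 2 = 1 →
        eval v f₂ = 0) :
    ¬ ∃ (k : ℕ) (g : Fin k → MvPolynomial (Fin 3) ℝ), f₁ = ∑ i, (g i) ^ 2 := by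
  rintro ⟨k, g, hg⟩
  have hdeg : ∀ i, (g i).totalDegree ≤ 3 := RobAux.degree_le_three f₁ hf₁hom k g hg
  -- vanishing of the gᵢ at points where Robinson1 vanishes
  have key : ∀ v : Fin 3 → ℝ, (v 0 = -1 ∨ v 0 = 0 ∨ v 0 = 1) →
      (v 1 = -1 ∨ v 1 = 0 ∨ v 1 = 1) → v 2 = 1 → eval v Robinson1 = 0 →
      ∀ i, eval v (g i) = 0 := by
    intro v h0 h1 h2 hrv i
    have hf2v := hzeros v h0 h1 h2
    have hsv := congrArg (eval v) hsum
    rw [map_add] at hsv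
    have hf1v : eval v f₁ = 0 := by rw [hrv, hf2v] at hsv; linarith
    rw [hg, map_sum] at hf1v
    simp only [map_pow] at hf1v
    have := (Finset.sum_eq_zero_iff_of_nonneg
      (fun j _ => sq_nonneg (eval v (g j)))).mp hf1v i (Finset.mem_univ i)
    exact pow_eq_zero_iff two_ne_zero |>.mp this
  have z1 : ∀ i, eval ![1,1,1] (g i) = 0 :=
    key ![1,1,1] (by norm_num) (by norm_num) (by norm_num [Matrix.cons_val_two]) (by norm_num [Robinson1, Matrix.cons_val_two])
  have z2 : ∀ i, eval ![1,-1,1] (g i) = 0 :=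
    key ![1,-1,1] (by norm_num) (by norm_num) (by norm_num [Matrix.cons_val_two]) (by norm_num [Robinson1, Matrix.cons_val_two])
  have z3 : ∀ i, eval ![-1,1,1] (g i) = 0 :=
    key ![-1,1,1] (by norm_num) (by norm_num) (by norm_num [Matrix.cons_val_two]) (by norm_num [Robinson1, Matrix.cons_val_two])
  have z4 : ∀ i, eval ![-1,-1,1] (g i) = 0 :=
    key ![-1,-1,1] (by norm_num) (by norm_num) (by norm_num [Matrix.cons_val_two]) (by norm_num [Robinson1, Matrix.cons_val_two])
  have z5 : ∀ i, eval ![1,0,1] (g i) = 0 :=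
    key ![1,0,1] (by norm_num) (by norm_num) (by norm_num [Matrix.cons_val_two]) (by norm_num [Robinson1, Matrix.cons_val_two])
  have z6 : ∀ i, eval ![-1,0,1] (g i) = 0 :=
    key ![-1,0,1] (by norm_num) (by norm_num) (by norm_num [Matrix.cons_val_two]) (by norm_num [Robinson1, Matrix.cons_val_two])
  have z7 : ∀ i, eval ![0,1,1] (g i) = 0 :=
    key ![0,1,1] (by norm_num) (by norm_num) (by norm_num [Matrix.cons_val_two]) (by norm_num [Robinson1, Matrix.cons_val_two])
  have z8 : ∀ i, eval ![0,-1,1] (g i) = 0 :=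
    key ![0,-1,1] (by norm_num) (by norm_num) (by norm_num [Matrix.cons_val_two]) (by norm_num [Robinson1, Matrix.cons_val_two])
  have z0 : ∀ i, eval ![0,0,1] (g i) = 0 := by
    intro i
    have h := RobAux.cb (g i) (hdeg i)
    rw [z1 i, z2 i, z3 i, z4 i, z5 i, z6 i, z7 i, z8 i] at h
    linarith
  have hf1z : eval ![0,0,1] f₁ = 0 := by
    rw [hg, map_sum]
    refine Finset.sum_eq_zero fun i _ => ?_
    rw [map_pow, z0 i]
    norm_num
  have hf2z : eval ![0,0,1] f₂ = 0 :=
    hzeros ![0,0,1] (by norm_num) (by norm_num) (by norm_num [Matrix.cons_val_two])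
  have hsv := congrArg (eval ![(0:ℝ),0,1]) hsum
  rw [map_add, hf1z, hf2z] at hsv
  norm_num [Robinson1, Matrix.cons_val_two] at hsv
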